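/- For any field F, the natural homomorphism from the amalgamated free product SL₂(F[t]) *_{Γ(F)} SL₂(F[t]) to SL₂(F[t,t⁻¹]) — induced on the first free factor by the inclusion SL₂(F[t]) ↪ SL₂(F[t,t⁻¹]) and on the second free factor by the map i₂, where both edge maps are the inclusion Γ(F) ↪ SL₂(F[t]) — is an isomorphism of groups. -/

import Mathlib

open Matrix MatrixGroups Polynomial LaurentPolynomial

namespace Paper

variable (R : Type) [CommRing R]

lemma entry00 (A B : SL(2, R)) : (↑(A * B) : Matrix (Fin 2) (Fin 2) R) 0 0
    = A.1 0 0 * B.1 0 0 + A.1 0 1 * B.1 1 0 := by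
  simp [Matrix.SpecialLinearGroup.coe_mul, Matrix.mul_apply, Fin.sum_univ_two]

lemma entry01 (A B : SL(2, R)) : (↑(A * B) : Matrix (Fin 2) (Fin 2) R) 0 1
    = A.1 0 0 * B.1 0 1 + A.1 0 1 * B.1 1 1 := by
  simp [Matrix.SpecialLinearGroup.coe_mul, Matrix.mul_apply, Fin.sum_univ_two]

lemma entry10 (A B : SL(2, R)) : (↑(A * B) : Matrix (Fin 2) (Fin 2) R) 1 0
    = A.1 1 0 * B.1 0 0 + A.1 1 1 * B.1 1 0 := by
  simp [Matrix.SpecialLinearGroup.coe_mul, Matrix.mul_apply, Fin.sum_univ_two]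

lemma entry11 (A B : SL(2, R)) : (↑(A * B) : Matrix (Fin 2) (Fin 2) R) 1 1
    = A.1 1 0 * B.1 0 1 + A.1 1 1 * B.1 1 1 := by
  simp [Matrix.SpecialLinearGroup.coe_mul, Matrix.mul_apply, Fin.sum_univ_two]

/-- The subgroup of upper triangular matrices in `SL₂(R)`. -/
def Bsub : Subgroup (Matrix.SpecialLinearGroup (Fin 2) R) where
  carrier := {A | A.1 1 0 = 0}
  one_mem' := by
    show ((1 : SL(2, R)) : Matrix (Fin 2) (Fin 2) R) 1 0 = 0
    simp [Matrix.SpecialLinearGroup.coe_one, Matrix.one_apply]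
  mul_mem' {A B} hA hB := by
    show (↑(A * B) : Matrix (Fin 2) (Fin 2) R) 1 0 = 0
    rw [entry10]
    simp only [Set.mem_setOf_eq] at hA hB
    rw [hA, hB]; ring
  inv_mem' {A} hA := by
    show (↑(A⁻¹) : Matrix (Fin 2) (Fin 2) R) 1 0 = 0
    rw [Matrix.SpecialLinearGroup.SL2_inv_expl A]
    simp only [Set.mem_setOf_eq] at hA
    simp [hA]

/-- The subgroup of matrices in `SL₂(R[t])` whose lower-left entry is divisible by `t`. -/
def Psub : Subgroup (Matrix.SpecialLinearGroup (Fin 2) (Polynomial R)) where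
  carrier := {A | (X : R[X]) ∣ A.1 1 0}
  one_mem' := by
    show (X : R[X]) ∣ ((1 : SL(2, R[X])) : Matrix (Fin 2) (Fin 2) R[X]) 1 0
    simp [Matrix.SpecialLinearGroup.coe_one, Matrix.one_apply]
  mul_mem' {A B} hA hB := by
    show (X : R[X]) ∣ (↑(A * B) : Matrix (Fin 2) (Fin 2) R[X]) 1 0
    rw [entry10]
    exact dvd_add (hA.mul_right _) (hB.mul_left _)
  inv_mem' {A} hA := by
    show (X : R[X]) ∣ (↑(A⁻¹) : Matrix (Fin 2) (Fin 2) R[X]) 1 0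
    rw [Matrix.SpecialLinearGroup.SL2_inv_expl A]
    simp only [Set.mem_setOf_eq] at hA
    simpa using hA.neg_right

/-- The elementary matrix `(1 r; 0 1)`. -/
def elUp (r : R) : SL(2, R) :=
  ⟨!![1, r; 0, 1], by simp [Matrix.det_fin_two_of]⟩

/-- The elementary matrix `(1 0; r 1)`. -/
def elLow (r : R) : SL(2, R) :=
  ⟨!![1, 0; r, 1], by simp [Matrix.det_fin_two_of]⟩

/-- The subgroup `E₂(R)` of `SL₂(R)` generated by the elementary matrices. -/
def Esub : Subgroup (Matrix.SpecialLinearGroup (Fin 2) R) :=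
  Subgroup.closure {A | (∃ r : R, A = elUp R r) ∨ (∃ r : R, A = elLow R r)}

variable {R}

lemma divX_X_mul (p : R[X]) : (X * p).divX = p := by
  ext n
  rw [Polynomial.coeff_divX, Polynomial.coeff_X_mul]

lemma X_mul_divX {p : R[X]} (h : (X : R[X]) ∣ p) : X * p.divX = p := by
  obtain ⟨c, rfl⟩ := h
  rw [divX_X_mul]

lemma X_mul_cancel {p q : R[X]} (h : X * p = X * q) : p = q := by
  ext n
  have := congrArg (fun r => Polynomial.coeff r (n + 1)) h
  simpa [Polynomial.coeff_X_mul] using this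

variable (R)

/-- The matrix underlying `conjP`. -/
noncomputable def conjMat (A : SL(2, R[X])) : Matrix (Fin 2) (Fin 2) R[X] :=
  !![A.1 0 0, X * A.1 0 1; (A.1 1 0).divX, A.1 1 1]

lemma conjMat_det {A : SL(2, R[X])} (hA : (X : R[X]) ∣ A.1 1 0) : (conjMat R A).det = 1 := by
  rw [conjMat, Matrix.det_fin_two_of]
  have h : X * (A.1 1 0).divX = A.1 1 0 := X_mul_divX hA
  have hd : A.1 0 0 * A.1 1 1 - A.1 0 1 * A.1 1 0 = 1 := by
    rw [← Matrix.det_fin_two]; exact A.2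
  calc A.1 0 0 * A.1 1 1 - X * A.1 0 1 * (A.1 1 0).divX
      = A.1 0 0 * A.1 1 1 - A.1 0 1 * (X * (A.1 1 0).divX) := by ring
    _ = 1 := by rw [h]; exact hd

lemma conjMat_mul {A B : SL(2, R[X])} (hA : (X : R[X]) ∣ A.1 1 0)
    (hB : (X : R[X]) ∣ B.1 1 0) :
    conjMat R (A * B) = conjMat R A * conjMat R B := by
  have h00 : A.1 0 0 * B.1 0 0 + A.1 0 1 * B.1 1 0
      = A.1 0 0 * B.1 0 0 + (X * A.1 0 1) * (B.1 1 0).divX := by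
    rw [show (X * A.1 0 1) * (B.1 1 0).divX = A.1 0 1 * (X * (B.1 1 0).divX) by ring,
      X_mul_divX hB]
  have h01 : X * (A.1 0 0 * B.1 0 1 + A.1 0 1 * B.1 1 1)
      = A.1 0 0 * (X * B.1 0 1) + (X * A.1 0 1) * B.1 1 1 := by ring
  have h10 : (A.1 1 0 * B.1 0 0 + A.1 1 1 * B.1 1 0).divX
      = (A.1 1 0).divX * B.1 0 0 + A.1 1 1 * (B.1 1 0).divX := by
    apply X_mul_cancel
    rw [X_mul_divX (dvd_add (hA.mul_right _) (hB.mul_left _))]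
    rw [mul_add,
      show X * ((A.1 1 0).divX * B.1 0 0) = (X * (A.1 1 0).divX) * B.1 0 0 by ring,
      X_mul_divX hA,
      show X * (A.1 1 1 * (B.1 1 0).divX) = A.1 1 1 * (X * (B.1 1 0).divX) by ring,
      X_mul_divX hB]
  have h11 : A.1 1 0 * B.1 0 1 + A.1 1 1 * B.1 1 1
      = (A.1 1 0).divX * (X * B.1 0 1) + A.1 1 1 * B.1 1 1 := by
    rw [show (A.1 1 0).divX * (X * B.1 0 1) = (X * (A.1 1 0).divX) * B.1 0 1 by ring,
      X_mul_divX hA]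
  rw [conjMat, conjMat, conjMat, entry00, entry01, entry10, entry11,
    Matrix.mul_fin_two, h10]
  rw [show (A.1 1 0 * B.1 0 1 + A.1 1 1 * B.1 1 1) = (A.1 1 0).divX * (X * B.1 0 1) + A.1 1 1 * B.1 1 1 from h11]
  rw [show (A.1 0 0 * B.1 0 0 + A.1 0 1 * B.1 1 0) = A.1 0 0 * B.1 0 0 + (X * A.1 0 1) * (B.1 1 0).divX from h00]
  rw [show X * (A.1 0 0 * B.1 0 1 + A.1 0 1 * B.1 1 1) = A.1 0 0 * (X * B.1 0 1) + (X * A.1 0 1) * B.1 1 1 from h01]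

/-- The second edge embedding `P → SL₂(R[t])`, conjugation by `diag(1,t)⁻¹` inside
`SL₂(R[t,t⁻¹])`: `(a, b; t·c, d) ↦ (a, t·b; c, d)`. -/
noncomputable def conjP : ↥(Psub R) →* SL(2, R[X]) where
  toFun A := ⟨conjMat R A.1, conjMat_det R A.2⟩
  map_one' := by
    apply Subtype.ext
    show conjMat R 1 = 1
    rw [conjMat]
    have h00 : ((1 : SL(2, R[X])) : Matrix (Fin 2) (Fin 2) R[X]) 0 0 = 1 := by
      rw [Matrix.SpecialLinearGroup.coe_one]; simp [Matrix.one_apply]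
    have h01 : ((1 : SL(2, R[X])) : Matrix (Fin 2) (Fin 2) R[X]) 0 1 = 0 := by
      rw [Matrix.SpecialLinearGroup.coe_one]; simp [Matrix.one_apply]
    have h10 : ((1 : SL(2, R[X])) : Matrix (Fin 2) (Fin 2) R[X]) 1 0 = 0 := by
      rw [Matrix.SpecialLinearGroup.coe_one]; simp [Matrix.one_apply]
    have h11 : ((1 : SL(2, R[X])) : Matrix (Fin 2) (Fin 2) R[X]) 1 1 = 1 := by
      rw [Matrix.SpecialLinearGroup.coe_one]; simp [Matrix.one_apply]
    rw [h00, h01, h10, h11, mul_zero, Polynomial.divX_zero, ← Matrix.one_fin_two]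
  map_mul' A B := by
    apply Subtype.ext
    show conjMat R (A.1 * B.1) = conjMat R A.1 * conjMat R B.1
    exact conjMat_mul R A.2 B.2

/-- The diagonal matrix `diag(1, t)` as a unit of the ring of 2×2 matrices over `R[t,t⁻¹]`. -/
noncomputable def DT : (Matrix (Fin 2) (Fin 2) (LaurentPolynomial R))ˣ where
  val := Matrix.diagonal ![1, LaurentPolynomial.T 1]
  inv := Matrix.diagonal ![1, LaurentPolynomial.T (-1)]
  val_inv := by
    rw [Matrix.diagonal_mul_diagonal]
    have : (fun i => (![1, LaurentPolynomial.T 1] : Fin 2 → LaurentPolynomial R) i *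
        ![1, LaurentPolynomial.T (-1)] i) = fun _ => (1 : LaurentPolynomial R) := by
      funext i
      fin_cases i
      · simp
      · show LaurentPolynomial.T 1 * LaurentPolynomial.T (-1) = 1
        rw [← LaurentPolynomial.T_add]; simp
    rw [this, Matrix.diagonal_one]
  inv_val := by
    rw [Matrix.diagonal_mul_diagonal]
    have : (fun i => (![1, LaurentPolynomial.T (-1)] : Fin 2 → LaurentPolynomial R) i *
        ![1, LaurentPolynomial.T 1] i) = fun _ => (1 : LaurentPolynomial R) := by
      funext i
      fin_cases i
      · simp
      · show LaurentPolynomial.T (-1) * LaurentPolynomial.T 1 = 1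
        rw [← LaurentPolynomial.T_add]; simp
    rw [this, Matrix.diagonal_one]

lemma DT_conj_det (M : Matrix (Fin 2) (Fin 2) (LaurentPolynomial R)) :
    (((DT R) : Matrix (Fin 2) (Fin 2) (LaurentPolynomial R)) * M * ((DT R)⁻¹).val).det = M.det := by
  rw [Matrix.det_mul, Matrix.det_mul]
  have h : ((DT R) : Matrix (Fin 2) (Fin 2) (LaurentPolynomial R)).det *
      ((DT R)⁻¹ : (Matrix (Fin 2) (Fin 2) (LaurentPolynomial R))ˣ).1.det = 1 := by
    rw [← Matrix.det_mul, Units.mul_inv, Matrix.det_one]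
  calc ((DT R) : Matrix (Fin 2) (Fin 2) (LaurentPolynomial R)).det * M.det * (((DT R)⁻¹).val).det
      = ((DT R) : Matrix (Fin 2) (Fin 2) (LaurentPolynomial R)).det * (((DT R)⁻¹).val).det * M.det := by ring
    _ = M.det := by rw [h, one_mul]

/-- The homomorphism `i₂ : SL₂(R[t]) → SL₂(R[t,t⁻¹])`, `A ↦ diag(1,t)·A·diag(1,t⁻¹)`. -/
noncomputable def i₂SL : SL(2, Polynomial R) →* SL(2, LaurentPolynomial R) where
  toFun A := ⟨(DT R : Matrix (Fin 2) (Fin 2) (LaurentPolynomial R)) *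
      A.1.map Polynomial.toLaurent * ↑(DT R)⁻¹, by
    rw [DT_conj_det]
    have : (A.1.map (Polynomial.toLaurent : R[X] → LaurentPolynomial R)).det
        = Polynomial.toLaurent A.1.det := by
      rw [← RingHom.mapMatrix_apply, ← RingHom.map_det]
    rw [this, A.2, _root_.map_one]⟩
  map_one' := by
    apply Subtype.ext
    show (DT R : Matrix (Fin 2) (Fin 2) (LaurentPolynomial R)) *
      ((1 : SL(2, R[X])).1.map Polynomial.toLaurent) * ((DT R)⁻¹ : (Matrix (Fin 2) (Fin 2) (LaurentPolynomial R))ˣ).val = 1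
    rw [Matrix.SpecialLinearGroup.coe_one]
    rw [show ((1 : Matrix (Fin 2) (Fin 2) R[X]).map (Polynomial.toLaurent : R[X] → _)) = 1 from
      Matrix.map_one _ (map_zero _) (map_one _)]
    rw [mul_one, Units.mul_inv]
  map_mul' A B := by
    apply Subtype.ext
    show (DT R : Matrix (Fin 2) (Fin 2) (LaurentPolynomial R)) *
        ((A * B).1.map Polynomial.toLaurent) * ((DT R)⁻¹ : (Matrix (Fin 2) (Fin 2) (LaurentPolynomial R))ˣ).val = _
    rw [Matrix.SpecialLinearGroup.coe_mul]
    rw [show ((A.1 * B.1).map (Polynomial.toLaurent : R[X] → _))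
        = A.1.map Polynomial.toLaurent * B.1.map Polynomial.toLaurent from
      Matrix.map_mul]
    show _ = ((DT R : Matrix (Fin 2) (Fin 2) (LaurentPolynomial R)) *
        A.1.map Polynomial.toLaurent * ((DT R)⁻¹ : (Matrix (Fin 2) (Fin 2) (LaurentPolynomial R))ˣ).val) *
      ((DT R : Matrix (Fin 2) (Fin 2) (LaurentPolynomial R)) *
        B.1.map Polynomial.toLaurent * ((DT R)⁻¹ : (Matrix (Fin 2) (Fin 2) (LaurentPolynomial R))ˣ).val)
    simp only [mul_assoc, Units.inv_mul_cancel_left]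

end Paper
namespace Paper

variable (R : Type) [CommRing R]

lemma T_conj (f : LaurentPolynomial R) :
    LaurentPolynomial.T 1 * f * LaurentPolynomial.T (-1) = f := by
  rw [mul_assoc, LaurentPolynomial.T_mul, LaurentPolynomial.mul_T_assoc]
  simp

/-- Compatibility: `i₂ ∘ conjP` is the canonical inclusion on `P`. -/
lemma i₂SL_conjP (A : ↥(Psub R)) :
    i₂SL R (conjP R A) = Matrix.SpecialLinearGroup.map Polynomial.toLaurent A.1 := by
  have hA : (X : R[X]) ∣ A.1.1 1 0 := A.2
  apply Subtype.ext
  show (DT R : Matrix (Fin 2) (Fin 2) (LaurentPolynomial R)) *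
      (conjMat R A.1).map Polynomial.toLaurent * ((DT R)⁻¹ : (Matrix (Fin 2) (Fin 2) (LaurentPolynomial R))ˣ).val
    = (Polynomial.toLaurent : R[X] →+* _).mapMatrix A.1.1
  rw [RingHom.mapMatrix_apply]
  have hD : (DT R : Matrix (Fin 2) (Fin 2) (LaurentPolynomial R))
      = Matrix.diagonal ![1, LaurentPolynomial.T 1] := rfl
  have hD' : ((DT R)⁻¹ : (Matrix (Fin 2) (Fin 2) (LaurentPolynomial R))ˣ).val
      = Matrix.diagonal ![1, LaurentPolynomial.T (-1)] := rfl
  rw [hD, hD', ← Matrix.ext_iff]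
  intro i j
  rw [Matrix.mul_diagonal, Matrix.diagonal_mul, Matrix.map_apply, Matrix.map_apply]
  fin_cases i <;> fin_cases j <;>
    simp only [conjMat, Fin.zero_eta, Fin.mk_one, Fin.isValue, id_eq,
      Matrix.cons_val', Matrix.cons_val_zero, Matrix.cons_val_one, Matrix.head_cons,
      Matrix.empty_val', Matrix.cons_val_fin_one, Matrix.head_fin_const, Matrix.of_apply]
  · rw [one_mul, mul_one]
  · rw [one_mul, _root_.map_mul, Polynomial.toLaurent_X, mul_comm (LaurentPolynomial.T 1),
      LaurentPolynomial.mul_T_assoc]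
    simp
  · rw [mul_one, ← Polynomial.toLaurent_X, ← _root_.map_mul, X_mul_divX hA]
  · exact T_conj R _

end Paper
namespace Paper

variable (R : Type) [CommRing R]

/-- The two edge embeddings of `P` into the two copies of `SL₂(R[t])`: the first is the
inclusion, the second is the inclusion conjugated by `diag(1,t)` (i.e. the identification of
`P` with a subgroup of the second vertex group of the tree of groups). -/
noncomputable def edgesP : Bool → (↥(Psub R) →* SL(2, Polynomial R))
  | true => (Psub R).subtype
  | false => conjP R

/-- On the first free factor, the canonical inclusion `SL₂(R[t]) → SL₂(R[t,t⁻¹])`;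
on the second free factor, the map `i₂`. -/
noncomputable def legsP : Bool → (SL(2, Polynomial R) →* SL(2, LaurentPolynomial R))
  | true => Matrix.SpecialLinearGroup.map Polynomial.toLaurent
  | false => i₂SL R

lemma compatP : ∀ b, (legsP R b).comp (edgesP R b)
    = (Matrix.SpecialLinearGroup.map (Polynomial.toLaurent : R[X] →+* LaurentPolynomial R)).comp
        (Psub R).subtype := by
  intro b
  cases b
  · exact MonoidHom.ext fun A => i₂SL_conjP R A
  · rfl

/-- The natural homomorphism from the amalgamated free product
`SL₂(R[t]) *_P SL₂(R[t])` to `SL₂(R[t,t⁻¹])`. -/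
noncomputable def amalgamToSL : Monoid.PushoutI (edgesP R) →* SL(2, LaurentPolynomial R) :=
  Monoid.PushoutI.lift (legsP R)
    ((Matrix.SpecialLinearGroup.map (Polynomial.toLaurent : R[X] →+* LaurentPolynomial R)).comp
      (Psub R).subtype)
    (compatP R)

end Paper

namespace Paper

variable {F : Type} [Field F]

/-- t-adic "order" valuation on Laurent polynomials. -/
noncomputable def vv (f : LaurentPolynomial F) : WithTop ℤ := f.coeff.support.min

lemma vv_zero : vv (0 : LaurentPolynomial F) = ⊤ := by
  simp [vv]

lemma vv_eq_top_iff {f : LaurentPolynomial F} : vv f = ⊤ ↔ f = 0 := by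
  simp [vv, Finset.min_eq_top, Finsupp.support_eq_empty]

lemma vv_ne_top_iff {f : LaurentPolynomial F} : vv f ≠ ⊤ ↔ f ≠ 0 := vv_eq_top_iff.ne

lemma min_map_emb {α β : Type*} [LinearOrder α] [LinearOrder β] (s : Finset α) (e : α ↪ β)
    (he : StrictMono e) : (s.map e).min = s.min.map e := by
  rcases s.eq_empty_or_nonempty with rfl | hs
  · simp
  · have h2 : (s.map e).Nonempty := hs.map
    rw [← Finset.coe_min' hs, ← Finset.coe_min' h2]
    have : (s.map e).min' h2 = e (s.min' hs) := by
      apply le_antisymm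
      · exact Finset.min'_le _ _ (Finset.mem_map_of_mem e (s.min'_mem hs))
      · apply Finset.le_min'
        intro y hy
        rcases Finset.mem_map.1 hy with ⟨x, hx, rfl⟩
        exact he.monotone (s.min'_le x hx)
    rw [this]
    rfl

lemma vv_mul_T (f : LaurentPolynomial F) (n : ℤ) : vv (f * T n) = vv f + n := by
  have hsupp : (f * T n).coeff.support = f.coeff.support.map (addRightEmbedding n) := by
    have := AddMonoidAlgebra.support_coeff_mul_single (k := F) (G := ℤ) f 1 (by simp) n
    exact this
  rw [vv, hsupp, min_map_emb _ _ (fun a b hab => by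
    simpa [Function.Embedding.coeFn_mk, addRightEmbedding] using (add_lt_add_right hab n))]
  rcases eq_or_ne f 0 with rfl | hf
  · simp [vv]
  · obtain ⟨m, hm⟩ := Finset.min_of_nonempty (α := ℤ)
      (Finsupp.support_nonempty_iff (f := f.coeff) |>.2 (by simpa using hf))
    rw [vv, hm]
    rfl

lemma vv_toLaurent (p : F[X]) : vv (toLaurent p) = p.trailingDegree.map (Nat.cast : ℕ → ℤ) := by
  rw [vv, toLaurent_support, min_map_emb _ _ (fun a b hab => by simpa using hab)]
  rfl

lemma vv_T (n : ℤ) : vv (T n : LaurentPolynomial F) = n := by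
  have : vv (1 * T n : LaurentPolynomial F) = vv (1 : LaurentPolynomial F) + n := vv_mul_T 1 n
  rw [one_mul] at this
  rw [this, show (1 : LaurentPolynomial F) = toLaurent 1 by simp, vv_toLaurent]
  simp

lemma vv_one : vv (1 : LaurentPolynomial F) = 0 := by
  simpa using vv_T (F := F) 0

lemma WithTop.map_intCast_add (a b : ℕ∞) :
    (a + b).map (Nat.cast : ℕ → ℤ) = a.map (Nat.cast : ℕ → ℤ) + b.map (Nat.cast : ℕ → ℤ) := by
  rcases a with _ | a <;> rcases b with _ | b
  · rfl
  · rfl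
  · rfl
  · show ((((a + b : ℕ) : ℤ) : WithTop ℤ)) = ((a : ℤ) : WithTop ℤ) + ((b : ℤ) : WithTop ℤ)
    push_cast
    rfl

lemma vv_mul (f g : LaurentPolynomial F) : vv (f * g) = vv f + vv g := by
  rcases eq_or_ne f 0 with rfl | hf
  · simp [vv_zero]
  rcases eq_or_ne g 0 with rfl | hg
  · simp [vv_zero]
  obtain ⟨n, p, hp⟩ := exists_T_pow f
  obtain ⟨m, q, hq⟩ := exists_T_pow g
  have key : toLaurent (p * q) = (f * g) * T ((n : ℤ) + (m : ℤ)) := by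
    rw [_root_.map_mul, hp, hq, T_add]
    ring
  have h1 : vv (f * g) + ((n : ℤ) + (m : ℤ)) = vv f + vv g + ((n : ℤ) + (m : ℤ)) := by
    have hc : ((n : ℤ) : WithTop ℤ) + ((m : ℤ) : WithTop ℤ)
        = (((n : ℤ) + (m : ℤ) : ℤ) : WithTop ℤ) := by push_cast; rfl
    rw [hc, ← vv_mul_T (f * g) ((n : ℤ) + (m : ℤ)), ← key, vv_toLaurent,
      Polynomial.trailingDegree_mul, WithTop.map_intCast_add, ← vv_toLaurent, ← vv_toLaurent,
      hp, hq, vv_mul_T, vv_mul_T]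
    push_cast
    ac_rfl
  exact WithTop.add_right_cancel (by simp) h1

lemma le_vv_add {f g : LaurentPolynomial F} : min (vv f) (vv g) ≤ vv (f + g) := by
  classical
  show _ ≤ (f + g).coeff.support.min
  apply Finset.le_min
  intro a ha
  have := Finsupp.support_add (g₁ := f.coeff) (g₂ := g.coeff) ha
  rcases Finset.mem_union.1 this with h | h
  · exact le_trans (min_le_left _ _) (Finset.min_le h)
  · exact le_trans (min_le_right _ _) (Finset.min_le h)

lemma vv_neg (f : LaurentPolynomial F) : vv (-f) = vv f := by
  unfold vv
  congr 1
  exact Finsupp.support_neg f.coeff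

lemma vv_add_eq_left {f g : LaurentPolynomial F} (h : vv f < vv g) : vv (f + g) = vv f := by
  apply le_antisymm
  · by_contra hlt
    push_neg at hlt
    have h2 : f = (f + g) + (-g) := by ring
    have h3 : min (vv (f+g)) (vv (-g)) ≤ vv ((f + g) + -g) := le_vv_add
    rw [← h2, vv_neg] at h3
    rcases min_cases (vv (f+g)) (vv g) with ⟨heq, _⟩ | ⟨heq, hlt2⟩
    · rw [heq] at h3; exact absurd h3 (not_le.2 hlt)
    · rw [heq] at h3; exact absurd (lt_of_le_of_lt h3 h) (lt_irrefl _)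
  · calc vv f = min (vv f) (vv g) := (min_eq_left h.le).symm
      _ ≤ vv (f + g) := le_vv_add

lemma vv_toLaurent_nonneg (p : F[X]) : 0 ≤ vv (toLaurent p) := by
  rw [vv_toLaurent]
  rcases p.trailingDegree with _ | n
  · exact le_top
  · show (0 : WithTop ℤ) ≤ ((n : ℤ) : WithTop ℤ)
    exact_mod_cast Int.ofNat_nonneg n

lemma vv_toLaurent_eq_zero {p : F[X]} (h : ¬ (X : F[X]) ∣ p) : vv (toLaurent p) = 0 := by
  rw [Polynomial.X_dvd_iff] at h
  rw [vv_toLaurent]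
  have : p.trailingDegree = 0 := by
    apply le_antisymm _ zero_le
    exact Polynomial.trailingDegree_le_of_ne_zero (n := 0) h
  rw [this]
  rfl


section PingPong

variable {F : Type} [Field F]

lemma mem_Psub_iff {A : SL(2, F[X])} : A ∈ Psub F ↔ (X : F[X]) ∣ A.1 1 0 := Iff.rfl

lemma mapSL_injective : Function.Injective
    (Matrix.SpecialLinearGroup.map (n := Fin 2)
      (Polynomial.toLaurent : F[X] →+* LaurentPolynomial F)) := by
  intro A B h
  apply Subtype.ext
  rw [← Matrix.ext_iff]
  intro i j
  have h2 : (Matrix.SpecialLinearGroup.map (n := Fin 2)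
        (Polynomial.toLaurent : F[X] →+* LaurentPolynomial F) A).1 i j
      = (Matrix.SpecialLinearGroup.map (n := Fin 2)
        (Polynomial.toLaurent : F[X] →+* LaurentPolynomial F) B).1 i j := by rw [h]
  have e : ∀ C : SL(2, F[X]), (Matrix.SpecialLinearGroup.map (n := Fin 2)
        (Polynomial.toLaurent : F[X] →+* LaurentPolynomial F) C).1 i j
      = Polynomial.toLaurent (C.1 i j) := fun C => rfl
  rw [e, e] at h2
  exact Polynomial.toLaurent_injective h2

lemma conjP_injective : Function.Injective (conjP F) := by
  intro A B h
  have h2 : i₂SL F (conjP F A) = i₂SL F (conjP F B) := by rw [h]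
  rw [i₂SL_conjP, i₂SL_conjP] at h2
  exact Subtype.ext (mapSL_injective h2)

lemma mem_range_conjP_iff {B : SL(2, F[X])} :
    B ∈ (conjP F).range ↔ (X : F[X]) ∣ B.1 0 1 := by
  constructor
  · rintro ⟨A, rfl⟩
    show (X : F[X]) ∣ conjMat F A.1 0 1
    simp only [conjMat, Matrix.of_apply, Matrix.cons_val', Matrix.cons_val_zero,
      Matrix.cons_val_one, Matrix.head_cons, Matrix.empty_val', Matrix.cons_val_fin_one]
    exact Dvd.intro _ rfl
  · intro hdvd
    have hdet : (!![B.1 0 0, (B.1 0 1).divX; X * B.1 1 0, B.1 1 1]).det = 1 := by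
      rw [Matrix.det_fin_two_of]
      have h1 : B.1 0 0 * B.1 1 1 - B.1 0 1 * B.1 1 0 = 1 := by
        rw [← Matrix.det_fin_two]; exact B.2
      calc B.1 0 0 * B.1 1 1 - (B.1 0 1).divX * (X * B.1 1 0)
          = B.1 0 0 * B.1 1 1 - (X * (B.1 0 1).divX) * B.1 1 0 := by ring
        _ = 1 := by rw [X_mul_divX hdvd]; exact h1
    refine ⟨⟨⟨!![B.1 0 0, (B.1 0 1).divX; X * B.1 1 0, B.1 1 1], hdet⟩, ?_⟩, ?_⟩
    · show (X : F[X]) ∣ (!![B.1 0 0, (B.1 0 1).divX; X * B.1 1 0, B.1 1 1]) 1 0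
      simp only [Matrix.cons_val', Matrix.cons_val_zero, Matrix.cons_val_one, Matrix.head_cons,
        Matrix.empty_val', Matrix.cons_val_fin_one, Matrix.of_apply, Matrix.head_fin_const]
      exact Dvd.intro _ rfl
    · apply Subtype.ext
      show conjMat F ⟨!![B.1 0 0, (B.1 0 1).divX; X * B.1 1 0, B.1 1 1], hdet⟩ = B.1
      unfold conjMat
      rw [show ((⟨!![B.1 0 0, (B.1 0 1).divX; X * B.1 1 0, B.1 1 1], hdet⟩ : SL(2, F[X]))
          : Matrix (Fin 2) (Fin 2) F[X]) = !![B.1 0 0, (B.1 0 1).divX; X * B.1 1 0, B.1 1 1]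
        from rfl]
      simp only [Matrix.cons_val', Matrix.cons_val_zero, Matrix.cons_val_one,
        Matrix.head_cons, Matrix.empty_val', Matrix.cons_val_fin_one, Matrix.head_fin_const,
        Matrix.of_apply]
      rw [X_mul_divX hdvd, divX_X_mul]
      exact (Matrix.eta_fin_two B.1).symm

lemma i₂SL_coe (B : SL(2, F[X])) :
    (i₂SL F B : Matrix (Fin 2) (Fin 2) (LaurentPolynomial F))
      = !![Polynomial.toLaurent (B.1 0 0), T (-1) * Polynomial.toLaurent (B.1 0 1);
           T 1 * Polynomial.toLaurent (B.1 1 0), Polynomial.toLaurent (B.1 1 1)] := by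
  show (DT F : Matrix (Fin 2) (Fin 2) (LaurentPolynomial F)) *
      (B.1.map Polynomial.toLaurent) * ((DT F)⁻¹ : (Matrix (Fin 2) (Fin 2) (LaurentPolynomial F))ˣ).val = _
  have hD : (DT F : Matrix (Fin 2) (Fin 2) (LaurentPolynomial F))
      = Matrix.diagonal ![1, LaurentPolynomial.T 1] := rfl
  have hD' : ((DT F)⁻¹ : (Matrix (Fin 2) (Fin 2) (LaurentPolynomial F))ˣ).val
      = Matrix.diagonal ![1, LaurentPolynomial.T (-1)] := rfl
  rw [hD, hD', ← Matrix.ext_iff]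
  intro i j
  rw [Matrix.mul_diagonal, Matrix.diagonal_mul, Matrix.map_apply]
  fin_cases i <;> fin_cases j <;>
    simp only [Fin.zero_eta, Fin.mk_one, Fin.isValue, Matrix.cons_val', Matrix.cons_val_zero,
      Matrix.cons_val_one, Matrix.head_cons, Matrix.empty_val', Matrix.cons_val_fin_one,
      Matrix.head_fin_const, Matrix.of_apply]
  · rw [one_mul, mul_one]
  · rw [one_mul, mul_comm]
  · rw [mul_one]
  · exact T_conj F _

/-- State "U": the second coordinate has valuation exactly `m`, dominating the first. -/
def InU (m : ℤ) (p : Fin 2 → LaurentPolynomial F) : Prop :=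
  vv (p 1) = (m : WithTop ℤ) ∧ (m : WithTop ℤ) ≤ vv (p 0)

/-- State "V": the first coordinate has valuation exactly `m`, strictly dominating the second. -/
def InV (m : ℤ) (p : Fin 2 → LaurentPolynomial F) : Prop :=
  vv (p 0) = (m : WithTop ℤ) ∧ (m : WithTop ℤ) < vv (p 1)

lemma mulVec2 (M : Matrix (Fin 2) (Fin 2) (LaurentPolynomial F))
    (p : Fin 2 → LaurentPolynomial F) (i : Fin 2) :
    M.mulVec p i = M i 0 * p 0 + M i 1 * p 1 := by
  simp [Matrix.mulVec, dotProduct, Fin.sum_univ_two]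

lemma stepA (A : SL(2, F[X])) (hA : ¬ (X : F[X]) ∣ A.1 1 0) {m : ℤ}
    {p : Fin 2 → LaurentPolynomial F} (h : InV m p) :
    InU m ((Matrix.SpecialLinearGroup.map (Polynomial.toLaurent (R := F)) A).1.mulVec p) := by
  obtain ⟨h0, h1⟩ := h
  have entry : ∀ i j, (Matrix.SpecialLinearGroup.map (Polynomial.toLaurent (R := F)) A).1 i j
      = Polynomial.toLaurent (A.1 i j) := fun i j => rfl
  have hvc : vv (Polynomial.toLaurent (A.1 1 0)) = 0 := vv_toLaurent_eq_zero hA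
  have hcx : vv (Polynomial.toLaurent (A.1 1 0) * p 0) = (m : WithTop ℤ) := by
    rw [vv_mul, hvc, zero_add, h0]
  have hdy : (m : WithTop ℤ) < vv (Polynomial.toLaurent (A.1 1 1) * p 1) := by
    calc (m : WithTop ℤ) < vv (p 1) := h1
      _ ≤ vv (Polynomial.toLaurent (A.1 1 1) * p 1) := by
          rw [vv_mul]
          calc vv (p 1) = 0 + vv (p 1) := (zero_add _).symm
            _ ≤ _ := add_le_add_left (vv_toLaurent_nonneg _) _
  constructor
  · rw [mulVec2, entry, entry, vv_add_eq_left (by rw [hcx]; exact hdy), hcx]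
  · rw [mulVec2, entry, entry]
    refine le_trans ?_ le_vv_add
    refine le_min ?_ ?_
    · rw [vv_mul]
      calc (m : WithTop ℤ) = 0 + (m : WithTop ℤ) := (zero_add _).symm
        _ ≤ _ := by
            rw [← h0]
            exact add_le_add_left (vv_toLaurent_nonneg _) _
    · rw [vv_mul]
      calc (m : WithTop ℤ) ≤ vv (p 1) := h1.le
        _ = 0 + vv (p 1) := (zero_add _).symm
        _ ≤ _ := add_le_add_left (vv_toLaurent_nonneg _) _

lemma stepB (B : SL(2, F[X])) (hB : ¬ (X : F[X]) ∣ B.1 0 1) {m : ℤ}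
    {p : Fin 2 → LaurentPolynomial F} (h : InU m p) :
    InV (m - 1) ((i₂SL F B).1.mulVec p) := by
  obtain ⟨h0, h1⟩ := h
  have e00 : (i₂SL F B).1 0 0 = Polynomial.toLaurent (B.1 0 0) := by rw [i₂SL_coe]; rfl
  have e01 : (i₂SL F B).1 0 1 = T (-1) * Polynomial.toLaurent (B.1 0 1) := by rw [i₂SL_coe]; rfl
  have e10 : (i₂SL F B).1 1 0 = T 1 * Polynomial.toLaurent (B.1 1 0) := by rw [i₂SL_coe]; rfl
  have e11 : (i₂SL F B).1 1 1 = Polynomial.toLaurent (B.1 1 1) := by rw [i₂SL_coe]; rfl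
  have hvb : vv (Polynomial.toLaurent (B.1 0 1)) = 0 := vv_toLaurent_eq_zero hB
  have hm1 : ((m - 1 : ℤ) : WithTop ℤ) = ((-1 : ℤ) : WithTop ℤ) + (m : WithTop ℤ) := by
    have : m - 1 = -1 + m := by ring
    rw [this, WithTop.coe_add]
  have hbx : vv ((T (-1) * Polynomial.toLaurent (B.1 0 1)) * p 1) = ((m - 1 : ℤ) : WithTop ℤ) := by
    rw [vv_mul, vv_mul, vv_T, hvb, add_zero, h0, hm1]
  have hax : ((m - 1 : ℤ) : WithTop ℤ) < vv (Polynomial.toLaurent (B.1 0 0) * p 0) := by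
    calc ((m - 1 : ℤ) : WithTop ℤ) < (m : WithTop ℤ) := by
          exact_mod_cast sub_lt_self m one_pos
      _ ≤ vv (p 0) := h1
      _ = 0 + vv (p 0) := (zero_add _).symm
      _ ≤ _ := by rw [vv_mul]; exact add_le_add_left (vv_toLaurent_nonneg _) _
  constructor
  · rw [mulVec2, e00, e01, add_comm, vv_add_eq_left (by rw [hbx]; exact hax), hbx]
  · rw [mulVec2, e10, e11]
    refine lt_of_lt_of_le ?_ le_vv_add
    refine lt_min ?_ ?_
    · rw [vv_mul, vv_mul, vv_T]
      calc ((m - 1 : ℤ) : WithTop ℤ) < (m : WithTop ℤ) := by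
            exact_mod_cast sub_lt_self m one_pos
        _ ≤ vv (p 0) := h1
        _ = 0 + (0 + vv (p 0)) := by rw [zero_add, zero_add]
        _ ≤ ((1 : ℤ) : WithTop ℤ) + (0 + vv (p 0)) := by
            refine add_le_add_left ?_ _
            exact_mod_cast zero_le_one
        _ ≤ _ := by
            rw [add_assoc]
            exact add_le_add_right (add_le_add_left (vv_toLaurent_nonneg _) _) _
    · rw [vv_mul]
      calc ((m - 1 : ℤ) : WithTop ℤ) < (m : WithTop ℤ) := by
            exact_mod_cast sub_lt_self m one_pos
        _ = (0 : WithTop ℤ) + (m : WithTop ℤ) := (zero_add _).symm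
        _ ≤ vv (Polynomial.toLaurent (B.1 1 1)) + vv (p 1) := by
            rw [h0]
            exact add_le_add_left (vv_toLaurent_nonneg _) _

end PingPong

section Words

variable {F : Type} [Field F]

/-- The matrix product of the images of the letters of a word. -/
noncomputable def mp (l : List ((b : Bool) × SL(2, F[X]))) : SL(2, LaurentPolynomial F) :=
  (l.map (fun σ => legsP F σ.1 σ.2)).prod

lemma mp_cons (σ : (b : Bool) × SL(2, F[X])) (l : List ((b : Bool) × SL(2, F[X]))) :
    mp (σ :: l) = legsP F σ.1 σ.2 * mp l := by
  simp [mp]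

lemma col_mul (A B : Matrix (Fin 2) (Fin 2) (LaurentPolynomial F)) (j : Fin 2) :
    (fun i => (A * B) i j) = A.mulVec (fun i => B i j) := by
  funext i
  simp [Matrix.mul_apply, Matrix.mulVec, dotProduct]

lemma red_true {A : SL(2, F[X])} (h : A ∉ (edgesP F true).range) : ¬ (X : F[X]) ∣ A.1 1 0 := by
  intro hdvd
  exact h (by rw [show edgesP F true = (Psub F).subtype from rfl, Subgroup.range_subtype]
              exact hdvd)

lemma red_false {B : SL(2, F[X])} (h : B ∉ (edgesP F false).range) : ¬ (X : F[X]) ∣ B.1 0 1 :=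
  fun hdvd => h (by rw [show edgesP F false = conjP F from rfl]
                    exact mem_range_conjP_iff.2 hdvd)

lemma legs_true (A : SL(2, F[X])) :
    legsP F true A = Matrix.SpecialLinearGroup.map (Polynomial.toLaurent (R := F)) A := rfl

lemma legs_false (B : SL(2, F[X])) : legsP F false B = i₂SL F B := rfl

/-- The key ping-pong estimate: for a nonempty reduced alternating word, some column of the
product of the images of its letters witnesses a definite valuation state. -/
lemma pingpong : ∀ (l : List ((b : Bool) × SL(2, F[X]))) (hl : l ≠ [])
    (_ : l.Chain' (fun a b => a.1 ≠ b.1))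
    (_ : ∀ σ ∈ l, σ.2 ∉ (edgesP F σ.1).range),
    ∃ j : Fin 2,
      if (l.head hl).1
      then InU (-(l.countP (fun σ => !σ.1) : ℤ)) (fun i => (mp l).1 i j)
      else InV (-(l.countP (fun σ => !σ.1) : ℤ)) (fun i => (mp l).1 i j)
  | [], hl, _, _ => absurd rfl hl
  | [⟨true, A⟩], _, _, hred => by
    refine ⟨0, ?_⟩
    simp only [List.head_cons, if_true]
    have hcount : (([⟨true, A⟩] : List ((b : Bool) × SL(2, F[X]))).countP (fun σ => !σ.1)) = 0 := by
      simp [List.countP_cons]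
    rw [hcount]
    have hA : ¬ (X : F[X]) ∣ A.1 1 0 := red_true (hred _ (List.mem_singleton_self _))
    have hbase : InV (0 : ℤ) (![1, 0] : Fin 2 → LaurentPolynomial F) := by
      constructor
      · show vv (1 : LaurentPolynomial F) = ((0 : ℤ) : WithTop ℤ)
        rw [vv_one]; rfl
      · show ((0:ℤ) : WithTop ℤ) < vv (0 : LaurentPolynomial F)
        rw [vv_zero]; exact WithTop.coe_lt_top _
    have := stepA A hA hbase
    have hcol : (fun i => (mp [⟨true, A⟩]).1 i 0)
        = (Matrix.SpecialLinearGroup.map (Polynomial.toLaurent (R := F)) A).1.mulVec ![1, 0] := by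
      have h1 : mp [⟨true, A⟩] = Matrix.SpecialLinearGroup.map (Polynomial.toLaurent (R := F)) A := by
        simp [mp, legs_true]
      rw [h1]
      funext i
      rw [mulVec2]
      simp
    rw [hcol]
    simpa using this
  | [⟨false, B⟩], _, _, hred => by
    refine ⟨1, ?_⟩
    simp only [List.head_cons, if_false]
    have hcount : (([⟨false, B⟩] : List ((b : Bool) × SL(2, F[X]))).countP (fun σ => !σ.1)) = 1 := by
      simp [List.countP_cons]
    rw [hcount]
    have hB : ¬ (X : F[X]) ∣ B.1 0 1 := red_false (hred _ (List.mem_singleton_self _))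
    have hbase : InU (0 : ℤ) (![0, 1] : Fin 2 → LaurentPolynomial F) := by
      constructor
      · show vv (1 : LaurentPolynomial F) = ((0 : ℤ) : WithTop ℤ)
        rw [vv_one]; rfl
      · show ((0:ℤ) : WithTop ℤ) ≤ vv (0 : LaurentPolynomial F)
        rw [vv_zero]; exact le_top
    have := stepB B hB hbase
    have hcol : (fun i => (mp [⟨false, B⟩]).1 i 1) = (i₂SL F B).1.mulVec ![0, 1] := by
      have h1 : mp [⟨false, B⟩] = i₂SL F B := by simp [mp, legs_false]
      rw [h1]
      funext i
      rw [mulVec2]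
      simp
    rw [hcol]
    have hm : ((0 : ℤ) - 1) = (-(1 : ℕ) : ℤ) := by norm_num
    rw [← hm]
    exact this
  | ⟨b, A⟩ :: τ :: rest, _, hchain, hred => by
    have hτne : (τ :: rest) ≠ [] := by simp
    have hch2 : (τ :: rest).Chain' (fun a b => a.1 ≠ b.1) := hchain.tail
    have hred2 : ∀ σ ∈ τ :: rest, σ.2 ∉ (edgesP F σ.1).range :=
      fun σ hσ => hred σ (List.mem_cons_of_mem _ hσ)
    obtain ⟨j, hj⟩ := pingpong (τ :: rest) hτne hch2 hred2
    have hbτ : τ.1 ≠ b := by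
      have := List.isChain_cons_cons.1 hchain
      exact fun h => this.1 h.symm
    have hcol : (fun i => (mp (⟨b, A⟩ :: τ :: rest)).1 i j)
        = (legsP F b A).1.mulVec (fun i => (mp (τ :: rest)).1 i j) := by
      rw [mp_cons]
      exact col_mul _ _ j
    refine ⟨j, ?_⟩
    cases b
    · -- letter is a B-letter (false); tail head is true
      have hτ : τ.1 = true := by
        cases hτ1 : τ.1
        · exact absurd hτ1 hbτ
        · rfl
      simp only [List.head_cons] at hj
      simp only [hτ, if_true] at hj
      simp only [List.head_cons, if_false]
      have hB : ¬ (X : F[X]) ∣ A.1 0 1 := red_false (hred _ (List.mem_cons_self))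
      have hstep := stepB A hB hj
      rw [hcol, legs_false]
      have hc : ((⟨false, A⟩ :: τ :: rest : List ((b : Bool) × SL(2, F[X]))).countP
          (fun σ => !σ.1)) = ((τ :: rest).countP (fun σ => !σ.1)) + 1 := by
        rw [List.countP_cons]
        simp
      rw [hc]
      have hm : -( (((τ :: rest).countP (fun σ => !σ.1)) + 1 : ℕ) : ℤ)
          = -(((τ :: rest).countP (fun σ => !σ.1) : ℕ) : ℤ) - 1 := by push_cast; ring
      rw [hm]
      exact hstep
    · -- letter is an A-letter (true); tail head is false
      have hτ : τ.1 = false := by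
        cases hτ1 : τ.1
        · rfl
        · exact absurd hτ1 hbτ
      simp only [List.head_cons] at hj
      simp only [hτ, Bool.false_eq_true, if_false] at hj
      simp only [List.head_cons, if_true]
      have hA : ¬ (X : F[X]) ∣ A.1 1 0 := red_true (hred _ (List.mem_cons_self))
      have hstep := stepA A hA hj
      rw [hcol, legs_true]
      have hc : ((⟨true, A⟩ :: τ :: rest : List ((b : Bool) × SL(2, F[X]))).countP
          (fun σ => !σ.1)) = ((τ :: rest).countP (fun σ => !σ.1)) := by
        rw [List.countP_cons]
        simp
      rw [hc]
      exact hstep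

end Words

section Injectivity

variable {F : Type} [Field F]

lemma edges_injective : ∀ b, Function.Injective (edgesP F b)
  | true => Subgroup.subtype_injective _
  | false => conjP_injective

lemma jGamma_injective : Function.Injective
    ((Matrix.SpecialLinearGroup.map (Polynomial.toLaurent : F[X] →+* LaurentPolynomial F)).comp
      (Psub F).subtype) :=
  mapSL_injective.comp (Subgroup.subtype_injective _)

lemma vv_jGamma (h : ↥(Psub F)) (i j : Fin 2) :
    0 ≤ vv ((((Matrix.SpecialLinearGroup.map
        (Polynomial.toLaurent : F[X] →+* LaurentPolynomial F)).comp
      (Psub F).subtype) h).1 i j) := by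
  have e : (((Matrix.SpecialLinearGroup.map
        (Polynomial.toLaurent : F[X] →+* LaurentPolynomial F)).comp
      (Psub F).subtype) h).1 i j = Polynomial.toLaurent ((h : SL(2, F[X])).1 i j) := rfl
  rw [e]
  exact vv_toLaurent_nonneg _

lemma eq_one_of_mem_set_of_mem_range {b : Bool} (d : Monoid.PushoutI.NormalWord.Transversal
      (edgesP F)) {g : SL(2, F[X])}
    (hset : g ∈ d.set b) (hrange : g ∈ (edgesP F b).range) : g = 1 := by
  obtain ⟨x, -, huniq⟩ := (d.compl b).existsUnique g
  have h1 := huniq ⟨⟨g, hrange⟩, ⟨1, d.one_mem b⟩⟩ (by simp)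
  have h2 := huniq ⟨⟨1, (edgesP F b).range.one_mem⟩, ⟨g, hset⟩⟩ (by simp)
  have h3 := h1.trans h2.symm
  have hfst := congrArg (fun p => ((p.1 : SL(2, F[X])))) h3
  simpa using hfst

theorem amalgamToSL_injective : Function.Injective (amalgamToSL F) := by
  rw [injective_iff_map_eq_one]
  intro x hx
  obtain ⟨d⟩ := Monoid.PushoutI.NormalWord.transversal_nonempty (edgesP F) edges_injective
  classical
  set w : Monoid.PushoutI.NormalWord d := Monoid.PushoutI.NormalWord.equiv x with hw
  have hxprod : w.prod = x := Monoid.PushoutI.NormalWord.equiv.symm_apply_apply x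
  have hlift : amalgamToSL F w.prod =
      ((Matrix.SpecialLinearGroup.map (Polynomial.toLaurent : F[X] →+* LaurentPolynomial F)).comp
        (Psub F).subtype) w.head * mp w.toList := by
    have hbase : amalgamToSL F (Monoid.PushoutI.base (edgesP F) w.head)
        = ((Matrix.SpecialLinearGroup.map
            (Polynomial.toLaurent : F[X] →+* LaurentPolynomial F)).comp
          (Psub F).subtype) w.head :=
      Monoid.PushoutI.lift_base (legsP F) _ (compatP F) w.head
    have hword : amalgamToSL F (Monoid.PushoutI.ofCoprodI w.toWord.prod) = mp w.toList := by
      rw [show amalgamToSL F (Monoid.PushoutI.ofCoprodI w.toWord.prod)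
          = ((amalgamToSL F).comp Monoid.PushoutI.ofCoprodI) w.toWord.prod from rfl,
        Monoid.CoprodI.Word.prod, map_list_prod, List.map_map,
        show mp (F := F) w.toList = (w.toList.map (fun σ => legsP F σ.1 σ.2)).prod from rfl]
      refine congrArg List.prod (List.map_congr_left (fun σ _ => ?_))
      show amalgamToSL F (Monoid.PushoutI.ofCoprodI (Monoid.CoprodI.of σ.2)) = legsP F σ.1 σ.2
      rw [Monoid.PushoutI.ofCoprodI_of]
      exact Monoid.PushoutI.lift_of (legsP F) _ (compatP F) σ.2
    rw [Monoid.PushoutI.NormalWord.prod, _root_.map_mul, hbase, hword]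
  rw [hxprod] at hlift
  rcases eq_or_ne w.toList [] with hnil | hnil
  · -- empty word: x = base of head
    have hmp : mp (F := F) w.toList = 1 := by rw [hnil]; simp [mp]
    rw [hx, hmp, mul_one] at hlift
    have hhead : w.head = 1 := jGamma_injective (by rw [← hlift]; simp)
    have : x = Monoid.PushoutI.base (edgesP F) w.head := by
      rw [← hxprod, Monoid.PushoutI.NormalWord.prod, Monoid.CoprodI.Word.prod, hnil]
      simp
    rw [this, hhead, _root_.map_one]
  · -- nonempty word: contradiction via ping-pong
    exfalso
    have hred : ∀ σ ∈ w.toList, σ.2 ∉ (edgesP F σ.1).range := by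
      intro σ hσ hrange
      have hset : σ.2 ∈ d.set σ.1 := w.normalized σ.1 σ.2 (by rwa [Sigma.eta])
      exact w.toWord.ne_one σ hσ (eq_one_of_mem_set_of_mem_range d hset hrange)
    obtain ⟨j, hif⟩ := pingpong w.toList hnil w.toWord.chain_ne hred
    have hmp : mp w.toList =
        ((Matrix.SpecialLinearGroup.map
            (Polynomial.toLaurent : F[X] →+* LaurentPolynomial F)).comp
          (Psub F).subtype) w.head⁻¹ := by
      rw [map_inv]
      exact (inv_eq_of_mul_eq_one_right (hlift.symm.trans hx)).symm
    set c : ℕ := w.toList.countP (fun σ => !σ.1) with hc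
    rcases Nat.eq_zero_or_pos c with hc0 | hcpos
    · -- all letters are A-letters: the word is a single A-letter
      have halltrue : ∀ σ ∈ w.toList, σ.1 = true := by
        intro σ hσ
        have := (List.countP_eq_zero).1 hc0 σ hσ
        simpa using this
      obtain ⟨σ, rest, hlw⟩ := List.exists_cons_of_ne_nil hnil
      have hrest : rest = [] := by
        rcases rest with _ | ⟨τ, rest'⟩
        · rfl
        · exfalso
          have hchain := w.toWord.chain_ne
          rw [hlw] at hchain
          have hne := (List.isChain_cons_cons.1 hchain).1
          have h1 : σ.1 = true := halltrue σ (by rw [hlw]; exact List.mem_cons_self)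
          have h2 : τ.1 = true := halltrue τ (by rw [hlw]; simp)
          exact hne (h1.trans h2.symm)
      have hσtrue : σ.1 = true := halltrue σ (by rw [hlw]; exact List.mem_cons_self)
      have hmpσ : mp w.toList = legsP F true σ.2 := by
        rw [hlw, hrest, mp_cons]
        rw [show mp (F := F) [] = 1 from rfl, mul_one]
        rw [hσtrue]
      have hσmem : σ.2 ∈ (edgesP F σ.1).range := by
        rw [hσtrue, show edgesP F true = (Psub F).subtype from rfl, Subgroup.range_subtype]
        have : σ.2 = ((w.head⁻¹ : ↥(Psub F)) : SL(2, F[X])) := by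
          apply mapSL_injective
          rw [← legs_true σ.2, ← hmpσ, hmp]
          rfl
        rw [this]
        exact (w.head⁻¹).2
      exact hred σ (by rw [hlw]; exact List.mem_cons_self) hσmem
    · -- at least one B-letter: a matrix entry has negative valuation
      have hneg : ∃ i : Fin 2, vv ((mp w.toList).1 i j) = ((-(c : ℤ) : ℤ) : WithTop ℤ) := by
        by_cases hb : (w.toList.head hnil).1
        · rw [if_pos hb] at hif
          exact ⟨1, hif.1⟩
        · rw [if_neg hb] at hif
          exact ⟨0, hif.1⟩
      obtain ⟨i, hi⟩ := hneg
      have h0le : (0 : WithTop ℤ) ≤ ((-(c : ℤ) : ℤ) : WithTop ℤ) := by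
        rw [← hi, hmp]
        exact vv_jGamma _ i j
      have : (0 : ℤ) ≤ -(c : ℤ) := by exact_mod_cast h0le
      omega

end Injectivity

section Surjectivity

variable {F : Type} [Field F]

/-- Upper elementary matrix over the Laurent ring. -/
noncomputable def EupL (f : LaurentPolynomial F) : SL(2, LaurentPolynomial F) :=
  ⟨!![1, f; 0, 1], by simp [Matrix.det_fin_two_of]⟩

/-- Lower elementary matrix over the Laurent ring. -/
noncomputable def ElowL (f : LaurentPolynomial F) : SL(2, LaurentPolynomial F) :=
  ⟨!![1, 0; f, 1], by simp [Matrix.det_fin_two_of]⟩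

lemma EupL_coe (f : LaurentPolynomial F) :
    (EupL f : Matrix (Fin 2) (Fin 2) (LaurentPolynomial F)) = !![1, f; 0, 1] := rfl

lemma ElowL_coe (f : LaurentPolynomial F) :
    (ElowL f : Matrix (Fin 2) (Fin 2) (LaurentPolynomial F)) = !![1, 0; f, 1] := rfl

/-- The diagonal matrix `diag(t, t⁻¹)`. -/
noncomputable def DgL : SL(2, LaurentPolynomial F) :=
  ⟨!![T 1, 0; 0, T (-1)], by
    simp only [Matrix.det_fin_two_of, mul_zero, sub_zero, ← T_add]
    norm_num⟩

lemma DgL_coe : (DgL (F := F) : Matrix (Fin 2) (Fin 2) (LaurentPolynomial F))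
    = !![T 1, 0; 0, T (-1)] := rfl

lemma map_mem_range (A : SL(2, F[X])) :
    Matrix.SpecialLinearGroup.map (Polynomial.toLaurent (R := F)) A ∈ (amalgamToSL F).range :=
  ⟨Monoid.PushoutI.of true A, Monoid.PushoutI.lift_of (legsP F) _ (compatP F) A⟩

lemma i₂_mem_range (B : SL(2, F[X])) : i₂SL F B ∈ (amalgamToSL F).range :=
  ⟨Monoid.PushoutI.of false B, Monoid.PushoutI.lift_of (legsP F) _ (compatP F) B⟩

lemma map_elUp (p : F[X]) :
    Matrix.SpecialLinearGroup.map (Polynomial.toLaurent (R := F)) (elUp (F[X]) p)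
      = EupL (Polynomial.toLaurent p) := by
  apply Subtype.ext
  rw [← Matrix.ext_iff]
  intro i j
  have e : (Matrix.SpecialLinearGroup.map (Polynomial.toLaurent (R := F)) (elUp (F[X]) p)).1 i j
      = Polynomial.toLaurent ((elUp (F[X]) p).1 i j) := rfl
  rw [e, EupL_coe]
  fin_cases i <;> fin_cases j <;> simp [elUp]

lemma map_elLow (p : F[X]) :
    Matrix.SpecialLinearGroup.map (Polynomial.toLaurent (R := F)) (elLow (F[X]) p)
      = ElowL (Polynomial.toLaurent p) := by
  apply Subtype.ext
  rw [← Matrix.ext_iff]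
  intro i j
  have e : (Matrix.SpecialLinearGroup.map (Polynomial.toLaurent (R := F)) (elLow (F[X]) p)).1 i j
      = Polynomial.toLaurent ((elLow (F[X]) p).1 i j) := rfl
  rw [e, ElowL_coe]
  fin_cases i <;> fin_cases j <;> simp [elLow]

lemma DgL_inv : (DgL (F := F))⁻¹ = ⟨!![T (-1), 0; 0, T 1], by
    simp only [Matrix.det_fin_two_of, mul_zero, sub_zero, ← T_add]
    norm_num⟩ := by
  apply inv_eq_of_mul_eq_one_right
  apply Subtype.ext
  show (!![T 1, 0; 0, T (-1)] : Matrix (Fin 2) (Fin 2) (LaurentPolynomial F))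
    * !![T (-1), 0; 0, T 1] = 1
  rw [Matrix.mul_fin_two, Matrix.one_fin_two,
    show (T 1 * T (-1) : LaurentPolynomial F) = 1 by rw [← T_add]; norm_num,
    show (T (-1) * T 1 : LaurentPolynomial F) = 1 by rw [← T_add]; norm_num]
  norm_num

lemma T_entry_comm (a c : ℤ) (x : LaurentPolynomial F) : T a * x * T c = T (a + c) * x := by
  rw [T_mul, mul_T_assoc, ← T_mul]

lemma diag_conj (a b c d : ℤ) (x y z w : LaurentPolynomial F) :
    !![T a, 0; 0, T b] * !![x, y; z, w] * !![T c, 0; 0, T d]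
      = !![T (a + c) * x, T (a + d) * y; T (b + c) * z, T (b + d) * w] := by
  rw [Matrix.mul_fin_two, Matrix.mul_fin_two]
  rw [← Matrix.ext_iff]
  intro i j
  fin_cases i <;> fin_cases j <;>
    simp only [Fin.zero_eta, Fin.mk_one, Fin.isValue, Matrix.cons_val', Matrix.cons_val_zero,
      Matrix.cons_val_one, Matrix.head_cons, Matrix.empty_val', Matrix.cons_val_fin_one,
      Matrix.head_fin_const, Matrix.of_apply, zero_mul, mul_zero, add_zero, zero_add] <;>
    exact T_entry_comm _ _ _

lemma DgL_mem : DgL (F := F) ∈ (amalgamToSL F).range := by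
  have hdet : (!![(0 : F[X]), 1; -1, 0]).det = 1 := by simp [Matrix.det_fin_two_of]
  set w₀ : SL(2, F[X]) := ⟨!![0, 1; -1, 0], hdet⟩ with hw₀
  have hcoe : (i₂SL F w₀ : Matrix (Fin 2) (Fin 2) (LaurentPolynomial F))
      = !![0, T (-1); -(T 1), 0] := by
    rw [i₂SL_coe]
    have e00 : w₀.1 0 0 = 0 := rfl
    have e01 : w₀.1 0 1 = 1 := rfl
    have e10 : w₀.1 1 0 = -1 := rfl
    have e11 : w₀.1 1 1 = 0 := rfl
    rw [e00, e01, e10, e11]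
    simp
  have hmap : (Matrix.SpecialLinearGroup.map (Polynomial.toLaurent (R := F)) w₀
      : Matrix (Fin 2) (Fin 2) (LaurentPolynomial F)) = !![0, 1; -1, 0] := by
    rw [← Matrix.ext_iff]
    intro i j
    have e : (Matrix.SpecialLinearGroup.map (Polynomial.toLaurent (R := F)) w₀).1 i j
        = Polynomial.toLaurent (w₀.1 i j) := rfl
    rw [e]
    fin_cases i <;> fin_cases j <;>
      simp only [hw₀, Fin.zero_eta, Fin.mk_one, Fin.isValue, Matrix.cons_val',
        Matrix.cons_val_zero, Matrix.cons_val_one, Matrix.head_cons, Matrix.empty_val',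
        Matrix.cons_val_fin_one, Matrix.head_fin_const, Matrix.of_apply, _root_.map_zero,
        _root_.map_one, map_neg]
  have key : DgL (F := F) = Matrix.SpecialLinearGroup.map (Polynomial.toLaurent (R := F)) w₀
      * (i₂SL F w₀)⁻¹ := by
    rw [eq_mul_inv_iff_mul_eq]
    apply Subtype.ext
    rw [Matrix.SpecialLinearGroup.coe_mul, hcoe, hmap, DgL_coe, Matrix.mul_fin_two]
    rw [show (T 1 * T (-1) : LaurentPolynomial F) = 1 by rw [← T_add]; norm_num]
    rw [show (T (-1) * -(T 1) : LaurentPolynomial F) = -1 by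
      rw [mul_neg, ← T_add]; norm_num]
    norm_num
  rw [key]
  exact mul_mem (map_mem_range w₀) (inv_mem (i₂_mem_range w₀))

lemma conj_up (f : LaurentPolynomial F) :
    DgL * EupL f * DgL⁻¹ = EupL (T 2 * f) := by
  rw [DgL_inv]
  apply Subtype.ext
  show (!![T 1, 0; 0, T (-1)] : Matrix (Fin 2) (Fin 2) (LaurentPolynomial F))
      * !![1, f; 0, 1] * !![T (-1), 0; 0, T 1] = !![1, T 2 * f; 0, 1]
  rw [diag_conj]
  norm_num [T_zero]

lemma conj_low (f : LaurentPolynomial F) :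
    DgL⁻¹ * ElowL f * DgL = ElowL (T 2 * f) := by
  rw [DgL_inv]
  apply Subtype.ext
  show (!![T (-1), 0; 0, T 1] : Matrix (Fin 2) (Fin 2) (LaurentPolynomial F))
      * !![1, 0; f, 1] * !![T 1, 0; 0, T (-1)] = !![1, 0; T 2 * f, 1]
  rw [diag_conj]
  norm_num [T_zero]

lemma EupL_mem (f : LaurentPolynomial F) : EupL f ∈ (amalgamToSL F).range := by
  have key : ∀ (k : ℕ) (f : LaurentPolynomial F),
      (∃ q : F[X], Polynomial.toLaurent q = f * T (2 * (k : ℤ))) →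
      EupL f ∈ (amalgamToSL F).range := by
    intro k
    induction k with
    | zero =>
      rintro f ⟨q, hq⟩
      have : f = Polynomial.toLaurent q := by
        rw [hq]
        norm_num
      rw [this, ← map_elUp]
      exact map_mem_range _
    | succ k ih =>
      rintro f ⟨q, hq⟩
      have h1 : EupL (T 2 * f) ∈ (amalgamToSL F).range := by
        apply ih
        refine ⟨q, ?_⟩
        rw [hq, mul_comm (T 2) f, mul_assoc, ← T_add]
        congr 2
        push_cast
        ring
      have h2 : EupL f = DgL⁻¹ * EupL (T 2 * f) * DgL := by
        rw [← conj_up f]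
        group
      rw [h2]
      exact mul_mem (mul_mem (inv_mem DgL_mem) h1) DgL_mem
  obtain ⟨n, q, hq⟩ := exists_T_pow f
  apply key n
  refine ⟨q * X ^ n, ?_⟩
  rw [_root_.map_mul, Polynomial.toLaurent_X_pow, hq, mul_assoc, ← T_add]
  congr 2
  push_cast
  ring

lemma ElowL_mem (f : LaurentPolynomial F) : ElowL f ∈ (amalgamToSL F).range := by
  have key : ∀ (k : ℕ) (f : LaurentPolynomial F),
      (∃ q : F[X], Polynomial.toLaurent q = f * T (2 * (k : ℤ))) →
      ElowL f ∈ (amalgamToSL F).range := by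
    intro k
    induction k with
    | zero =>
      rintro f ⟨q, hq⟩
      have : f = Polynomial.toLaurent q := by
        rw [hq]
        norm_num
      rw [this, ← map_elLow]
      exact map_mem_range _
    | succ k ih =>
      rintro f ⟨q, hq⟩
      have h1 : ElowL (T 2 * f) ∈ (amalgamToSL F).range := by
        apply ih
        refine ⟨q, ?_⟩
        rw [hq, mul_comm (T 2) f, mul_assoc, ← T_add]
        congr 2
        push_cast
        ring
      have h2 : ElowL f = DgL * ElowL (T 2 * f) * DgL⁻¹ := by
        rw [← conj_low f]
        group
      rw [h2]
      exact mul_mem (mul_mem DgL_mem h1) (inv_mem DgL_mem)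
  obtain ⟨n, q, hq⟩ := exists_T_pow f
  apply key n
  refine ⟨q * X ^ n, ?_⟩
  rw [_root_.map_mul, Polynomial.toLaurent_X_pow, hq, mul_assoc, ← T_add]
  congr 2
  push_cast
  ring

lemma diag_mem {u v : LaurentPolynomial F} (huv : u * v = 1)
    (hdet : (!![u, 0; 0, v]).det = 1) :
    (⟨!![u, 0; 0, v], hdet⟩ : SL(2, LaurentPolynomial F)) ∈ (amalgamToSL F).range := by
  have key : (⟨!![u, 0; 0, v], hdet⟩ : SL(2, LaurentPolynomial F))
      = EupL u * ElowL (-v) * EupL u * (EupL (-1) * ElowL 1 * EupL (-1)) := by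
    apply Subtype.ext
    show (!![u, 0; 0, v] : Matrix (Fin 2) (Fin 2) (LaurentPolynomial F))
      = ((EupL u * ElowL (-v) * EupL u * (EupL (-1) * ElowL 1 * EupL (-1))
          : SL(2, LaurentPolynomial F)) : Matrix (Fin 2) (Fin 2) (LaurentPolynomial F))
    simp only [Matrix.SpecialLinearGroup.coe_mul, EupL_coe, ElowL_coe]
    rw [Matrix.mul_fin_two, Matrix.mul_fin_two, Matrix.mul_fin_two, Matrix.mul_fin_two, Matrix.mul_fin_two]
    rw [← Matrix.ext_iff]
    intro i j
    fin_cases i <;> fin_cases j <;>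
      simp only [Fin.zero_eta, Fin.mk_one, Fin.isValue, Matrix.cons_val', Matrix.cons_val_zero,
        Matrix.cons_val_one, Matrix.head_cons, Matrix.empty_val', Matrix.cons_val_fin_one,
        Matrix.head_fin_const, Matrix.of_apply]
    · linear_combination u * huv
    · linear_combination -huv
    · linear_combination huv
    · ring
  rw [key]
  exact mul_mem (mul_mem (mul_mem (EupL_mem u) (ElowL_mem (-v))) (EupL_mem u))
    (mul_mem (mul_mem (EupL_mem (-1)) (ElowL_mem 1)) (EupL_mem (-1)))

lemma wL_mem :
    (⟨!![0, 1; -1, 0], by simp [Matrix.det_fin_two_of]⟩ : SL(2, LaurentPolynomial F))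
      ∈ (amalgamToSL F).range := by
  have hdet : (!![(0 : F[X]), 1; -1, 0]).det = 1 := by simp [Matrix.det_fin_two_of]
  have key : (⟨!![0, 1; -1, 0], by simp [Matrix.det_fin_two_of]⟩ : SL(2, LaurentPolynomial F))
      = Matrix.SpecialLinearGroup.map (Polynomial.toLaurent (R := F)) ⟨!![0, 1; -1, 0], hdet⟩ := by
    apply Subtype.ext
    rw [← Matrix.ext_iff]
    intro i j
    have e : (Matrix.SpecialLinearGroup.map (Polynomial.toLaurent (R := F))
          (⟨!![0, 1; -1, 0], hdet⟩ : SL(2, F[X]))).1 i j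
        = Polynomial.toLaurent ((⟨!![0, 1; -1, 0], hdet⟩ : SL(2, F[X])).1 i j) := rfl
    rw [e]
    fin_cases i <;> fin_cases j <;>
      simp only [Fin.zero_eta, Fin.mk_one, Fin.isValue, Matrix.cons_val',
        Matrix.cons_val_zero, Matrix.cons_val_one, Matrix.head_cons, Matrix.empty_val',
        Matrix.cons_val_fin_one, Matrix.head_fin_const, Matrix.of_apply, _root_.map_zero,
        _root_.map_one, map_neg]
  rw [key]
  exact map_mem_range _

lemma tl_mul (q p : F[X]) (a b : ℤ) :
    (Polynomial.toLaurent q * T a) * (Polynomial.toLaurent p * T b)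
      = Polynomial.toLaurent (q * p) * T (a + b) := by
  rw [_root_.map_mul, T_add]
  ring

lemma tl_shift (r₀ : F[X]) (s : ℕ) (c : ℤ) :
    Polynomial.toLaurent ((X : F[X]) ^ s * r₀) * T c
      = Polynomial.toLaurent r₀ * T ((s : ℤ) + c) := by
  rw [_root_.map_mul, Polynomial.toLaurent_X_pow, T_mul, mul_T_assoc]

lemma case_c_zero (M : SL(2, LaurentPolynomial F)) (hc : M.1 1 0 = 0) :
    M ∈ (amalgamToSL F).range := by
  have hdet : M.1 0 0 * M.1 1 1 - M.1 0 1 * M.1 1 0 = 1 := by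
    rw [← Matrix.det_fin_two]; exact M.2
  rw [hc, mul_zero, sub_zero] at hdet
  have hdetD : (!![M.1 0 0, 0; 0, M.1 1 1]).det = 1 := by
    simp [Matrix.det_fin_two_of, hdet]
  have key : M = ⟨!![M.1 0 0, 0; 0, M.1 1 1], hdetD⟩ * EupL (M.1 1 1 * M.1 0 1) := by
    apply Subtype.ext
    show (M : Matrix (Fin 2) (Fin 2) (LaurentPolynomial F))
      = ((⟨!![M.1 0 0, 0; 0, M.1 1 1], hdetD⟩ * EupL (M.1 1 1 * M.1 0 1)
          : SL(2, LaurentPolynomial F)) : Matrix (Fin 2) (Fin 2) (LaurentPolynomial F))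
    change (M : Matrix (Fin 2) (Fin 2) (LaurentPolynomial F)) = ((⟨!![M.1 0 0, 0; 0, M.1 1 1], hdetD⟩ : SL(2, LaurentPolynomial F)) : Matrix (Fin 2) (Fin 2) (LaurentPolynomial F)) * !![1, M.1 1 1 * M.1 0 1; 0, 1]
    rw [show ((⟨!![M.1 0 0, 0; 0, M.1 1 1], hdetD⟩ : SL(2, LaurentPolynomial F))
        : Matrix (Fin 2) (Fin 2) (LaurentPolynomial F)) = !![M.1 0 0, 0; 0, M.1 1 1] from rfl]
    rw [Matrix.mul_fin_two]
    rw [← Matrix.ext_iff]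
    intro i j
    fin_cases i <;> fin_cases j <;>
      simp only [Fin.zero_eta, Fin.mk_one, Fin.isValue, Matrix.cons_val', Matrix.cons_val_zero,
        Matrix.cons_val_one, Matrix.head_cons, Matrix.empty_val', Matrix.cons_val_fin_one,
        Matrix.head_fin_const, Matrix.of_apply]
    · ring
    · linear_combination (-(M.1 0 1)) * hdet
    · rw [hc]; ring
    · ring
  rw [key]
  exact mul_mem (diag_mem hdet hdetD) (EupL_mem _)

lemma strip : ∀ (n : ℕ) (p' : F[X]), p'.natDegree ≤ n →
    ∃ (s : ℕ) (p : F[X]), p' = X ^ s * p ∧ (p = 0 ∨ p.coeff 0 ≠ 0) := by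
  intro n
  induction n with
  | zero =>
    intro p' hn
    by_cases hc : p'.coeff 0 ≠ 0
    · exact ⟨0, p', by simp, Or.inr hc⟩
    · push_neg at hc
      have hC : p' = Polynomial.C (p'.coeff 0) :=
        Polynomial.eq_C_of_natDegree_eq_zero (Nat.le_zero.1 hn)
      refine ⟨0, 0, ?_, Or.inl rfl⟩
      rw [hC, hc]
      simp
  | succ n ih =>
    intro p' hn
    by_cases h0 : p' = 0
    · exact ⟨0, 0, by simp [h0], Or.inl rfl⟩
    by_cases hc : p'.coeff 0 ≠ 0
    · exact ⟨0, p', by simp, Or.inr hc⟩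
    push_neg at hc
    have hdvd : (X : F[X]) ∣ p' := Polynomial.X_dvd_iff.2 hc
    have heq : p' = X * p'.divX := (X_mul_divX hdvd).symm
    have hd : p'.divX.natDegree ≤ n := by
      have h1 := Polynomial.natDegree_divX_eq_natDegree_tsub_one (p := p')
      omega
    obtain ⟨s, p, hsp, hp⟩ := ih p'.divX hd
    exact ⟨s + 1, p, by rw [heq, hsp, pow_succ]; ring, hp⟩

lemma main_ind (n : ℕ) : ∀ (M : SL(2, LaurentPolynomial F)) (p : F[X]) (m : ℤ),
    M.1 1 0 = Polynomial.toLaurent p * T m → p.coeff 0 ≠ 0 → p.natDegree ≤ n →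
    M ∈ (amalgamToSL F).range := by
  induction n using Nat.strong_induction_on with
  | _ n ih =>
  intro M p m hc hp0 hdeg
  obtain ⟨k, pa, hpa⟩ := exists_T_pow (M.1 0 0)
  have ha : M.1 0 0 = Polynomial.toLaurent pa * T (-(k : ℤ)) := by
    rw [hpa, mul_assoc, ← T_add]
    simp
  have hp : p ≠ 0 := fun h => hp0 (by simp [h])
  have hlc : p.leadingCoeff ≠ 0 := Polynomial.leadingCoeff_ne_zero.2 hp
  set pmon := p * Polynomial.C (p.leadingCoeff)⁻¹ with hpmon
  have hmon : pmon.Monic := Polynomial.monic_mul_leadingCoeff_inv hp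
  set r := pa %ₘ pmon with hrdef
  have hdiv : pa %ₘ pmon + pmon * (pa /ₘ pmon) = pa := Polynomial.modByMonic_add_div pa pmon
  set g : LaurentPolynomial F :=
    Polynomial.toLaurent ((pa /ₘ pmon) * Polynomial.C (p.leadingCoeff)⁻¹) * T (-(k:ℤ) - m)
    with hgdef
  have hgc : g * M.1 1 0 = Polynomial.toLaurent (pmon * (pa /ₘ pmon)) * T (-(k:ℤ)) := by
    rw [hc, hgdef, tl_mul]
    congr 1
    · congr 1
      rw [hpmon]
      ring
    · congr 1
      ring
  have hsub : pa - pmon * (pa /ₘ pmon) = r := by linear_combination -hdiv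
  have hdiff : M.1 0 0 - g * M.1 1 0 = Polynomial.toLaurent r * T (-(k:ℤ)) := by
    rw [ha, hgc, ← sub_mul, ← map_sub, hsub]
  have hwdet : (!![(0 : LaurentPolynomial F), 1; -1, 0]).det = 1 := by
    simp [Matrix.det_fin_two_of]
  set wL : SL(2, LaurentPolynomial F) := ⟨!![0, 1; -1, 0], hwdet⟩ with hwLdef
  set M₂ : SL(2, LaurentPolynomial F) := wL * (EupL (-g) * M) with hM₂
  have ew10 : wL.1 1 0 = -1 := rfl
  have ew11 : wL.1 1 1 = 0 := rfl
  have eu00 : (EupL (-g)).1 0 0 = 1 := rfl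
  have eu01 : (EupL (-g)).1 0 1 = -g := rfl
  have hM₂c : M₂.1 1 0 = -(M.1 0 0 - g * M.1 1 0) := by
    rw [hM₂]
    rw [entry10, entry00, ew10, ew11, eu00, eu01]
    ring
  obtain ⟨s, r₀, hsr, hr₀⟩ := strip (-r).natDegree (-r) le_rfl
  have hM₂c' : M₂.1 1 0 = Polynomial.toLaurent r₀ * T ((s : ℤ) + -(k : ℤ)) := by
    rw [hM₂c, hdiff, ← neg_mul, ← map_neg, hsr, tl_shift]
  have hM₂mem : M₂ ∈ (amalgamToSL F).range := by
    rcases hr₀ with h0 | h0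
    · apply case_c_zero
      rw [hM₂c', h0]
      simp
    · have hrne : r ≠ 0 := by
        rintro h
        rw [h, neg_zero] at hsr
        rcases mul_eq_zero.1 hsr.symm with hX | hr0
        · exact pow_ne_zero s Polynomial.X_ne_zero hX
        · exact h0 (by rw [hr0]; simp)
      have hdlt : (pa %ₘ pmon).degree < pmon.degree := Polynomial.degree_modByMonic_lt pa hmon
      have hdeglt : r.natDegree < pmon.natDegree :=
        Polynomial.natDegree_lt_natDegree hrne (by rw [hrdef]; exact hdlt)
      have hpmdeg : pmon.natDegree = p.natDegree := by
        rw [hpmon]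
        exact Polynomial.natDegree_mul_C (inv_ne_zero hlc)
      have hr₀ne : r₀ ≠ 0 := fun h => h0 (by rw [h]; simp)
      have hr₀le : r₀.natDegree ≤ r.natDegree := by
        have h1 : (-r).natDegree = s + r₀.natDegree := by
          rw [hsr, Polynomial.natDegree_mul (pow_ne_zero _ Polynomial.X_ne_zero) hr₀ne,
            Polynomial.natDegree_X_pow]
        have h2 : (-r).natDegree = r.natDegree := Polynomial.natDegree_neg r
        omega
      have hr₀deg : r₀.natDegree < n := by
        calc r₀.natDegree ≤ r.natDegree := hr₀le
          _ < pmon.natDegree := hdeglt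
          _ = p.natDegree := hpmdeg
          _ ≤ n := hdeg
      exact ih r₀.natDegree hr₀deg M₂ r₀ _ hM₂c' h0 le_rfl
  have hM : M = (EupL (-g))⁻¹ * (wL⁻¹ * M₂) := by
    rw [hM₂]
    group
  rw [hM]
  exact mul_mem (inv_mem (EupL_mem _)) (mul_mem (inv_mem wL_mem) hM₂mem)

lemma amalgamToSL_surjective : Function.Surjective (amalgamToSL F) := by
  intro N
  have hmem : N ∈ (amalgamToSL F).range := by
    obtain ⟨k, pc, hpc⟩ := exists_T_pow (N.1 1 0)
    have hcN : N.1 1 0 = Polynomial.toLaurent pc * T (-(k : ℤ)) := by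
      rw [hpc, mul_assoc, ← T_add]
      simp
    obtain ⟨s, p, hsp, hp⟩ := strip pc.natDegree pc le_rfl
    rcases hp with h0 | h0
    · apply case_c_zero
      rw [hcN, hsp, h0]
      simp
    · apply main_ind p.natDegree N p ((s : ℤ) + -(k : ℤ)) _ h0 le_rfl
      rw [hcN, hsp, tl_shift]
  obtain ⟨x, hx⟩ := hmem
  exact ⟨x, hx⟩

end Surjectivity

end Paper

open Paper in
/-- For any field `F`, `SL₂(F[t,t⁻¹])` is the amalgamated free product
`SL₂(F[t]) *_{Γ(F)} SL₂(F[t])`: the natural homomorphism, given by the canonical inclusion on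
the first free factor and by `i₂` on the second, is an isomorphism. -/
theorem amalgam_SL2_Laurent_field (F : Type) [Field F] :
    Function.Bijective (amalgamToSL F) :=
  ⟨amalgamToSL_injective, amalgamToSL_surjective⟩
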